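/- Let V be a finite set of boxes with size function w : V → [0,1]^{d−1} × [0,∞), and suppose (V,w) admits an orthogonal packing into the strip [0,1]^{d−1} × [0,h] for some h > 0 (i.e., positions p : V → ℝ^d with 0 ≤ p_i(b), p_i(b) + w_i(b) ≤ 1 for i = 1,…,d−1, 0 ≤ p_d(b), p_d(b) + w_d(b) ≤ h, and pairwise interior-disjointness). Then for all dual feasible functions u_1, …, u_{d−1}: ∑_{b∈V} (∏_{i=1}^{d−1} u_i(w_i(b)))·w_d(b) ≤ h. In particular, this transformed total volume is a lower bound on the optimal strip height for the strip packing instance (V,w). -/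

import Mathlib

/-- A function `u : [0,1] → [0,1]` is *dual feasible* if it maps `[0,1]` into `[0,1]`
and for every finite family `x₁, …, xₙ` of numbers in `[0,1]` with `∑ xⱼ ≤ 1`
one has `∑ u (xⱼ) ≤ 1`. -/
def DualFeasible (u : ℝ → ℝ) : Prop :=
  (∀ x ∈ Set.Icc (0 : ℝ) 1, u x ∈ Set.Icc (0 : ℝ) 1) ∧
  ∀ (n : ℕ) (x : Fin n → ℝ), (∀ j, x j ∈ Set.Icc (0 : ℝ) 1) →
    ∑ j, x j ≤ 1 → ∑ j, u (x j) ≤ 1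

attribute [local instance] Classical.propDecidable

lemma DualFeasible.zero' {u} (hu : DualFeasible u) : u 0 = 0 := by
  have h0 : (0:ℝ) ∈ Set.Icc (0:ℝ) 1 := by norm_num
  have hnn : 0 ≤ u 0 := (hu.1 0 h0).1
  by_contra hne
  have hpos : 0 < u 0 := lt_of_le_of_ne hnn (Ne.symm hne)
  obtain ⟨n, hn⟩ := exists_nat_gt (1 / u 0)
  have h2 := hu.2 n (fun _ => 0) (fun _ => h0) (by simp)
  rw [Finset.sum_const, Finset.card_univ, Fintype.card_fin, nsmul_eq_mul] at h2
  have : (1 : ℝ) / u 0 * u 0 < (n : ℝ) * u 0 := by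
    exact mul_lt_mul_of_pos_right hn hpos
  rw [one_div_mul_cancel (ne_of_gt hpos)] at this
  linarith

lemma DualFeasible.sum_le {u} (hu : DualFeasible u) {ι} (S : Finset ι) (x : ι → ℝ)
    (hx : ∀ j ∈ S, x j ∈ Set.Icc (0:ℝ) 1) (hsum : ∑ j ∈ S, x j ≤ 1) :
    ∑ j ∈ S, u (x j) ≤ 1 := by
  have e := S.equivFin
  have key := hu.2 S.card (fun k => x (e.symm k)) (fun k => hx _ (e.symm k).2) ?_
  · calc ∑ j ∈ S, u (x j) = ∑ j : S, u (x j) := (Finset.sum_coe_sort S fun j => u (x j)).symm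
      _ = ∑ k : Fin S.card, u (x (e.symm k)) := (Equiv.sum_comp e.symm fun j => u (x (j:ι))).symm
      _ ≤ 1 := key
  · calc ∑ k : Fin S.card, x (e.symm k) = ∑ j : S, x j := Equiv.sum_comp e.symm fun j => x (j:ι)
      _ = ∑ j ∈ S, x j := Finset.sum_coe_sort _ _
      _ ≤ 1 := hsum
attribute [local instance] Classical.propDecidable

lemma sum_lengths {ι : Type*} (p x : ι → ℝ) :
    ∀ (n : ℕ) (S : Finset ι) (M : ℝ), S.card ≤ n → 0 ≤ M →
    (∀ s ∈ S, 0 ≤ p s ∧ 0 < x s ∧ p s + x s ≤ M) →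
    (∀ s ∈ S, ∀ t ∈ S, s ≠ t → p s + x s ≤ p t ∨ p t + x t ≤ p s) →
    ∑ s ∈ S, x s ≤ M := by
  intro n
  induction n with
  | zero => intro S M hc hM _ _
            rw [Nat.le_zero, Finset.card_eq_zero] at hc
            simp [hc, hM]
  | succ n ih =>
    intro S M hc hM hbox hord
    rcases S.eq_empty_or_nonempty with rfl | hne
    · simpa using hM
    obtain ⟨s, hs, hmax⟩ := S.exists_max_image p hne
    have hrest : ∀ t ∈ S.erase s, p t + x t ≤ p s := by
      intro t ht
      have htS := Finset.mem_of_mem_erase ht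
      have hts : t ≠ s := Finset.ne_of_mem_erase ht
      rcases hord s hs t htS (Ne.symm hts) with h1 | h1
      · exfalso
        have := hmax t htS
        have := (hbox s hs).2.1
        linarith
      · exact h1
    have hsum : ∑ t ∈ S.erase s, x t ≤ p s := by
      apply ih (S.erase s) (p s)
      · have := Finset.card_erase_lt_of_mem hs
        omega
      · exact (hbox s hs).1
      · intro t ht
        exact ⟨(hbox t (Finset.mem_of_mem_erase ht)).1, (hbox t (Finset.mem_of_mem_erase ht)).2.1,
          hrest t ht⟩
      · intro a ha b hb hab
        exact hord a (Finset.mem_of_mem_erase ha) b (Finset.mem_of_mem_erase hb) hab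
    have := (hbox s hs).2.2
    rw [← Finset.sum_erase_add S x hs]
    linarith

lemma chain_exists {ι : Type*} (p x : ι → ℝ) :
    ∀ (n : ℕ) (A : Finset ι), A.card ≤ n → (∀ j ∈ A, 0 < x j) → A.Nonempty →
    ∃ S : Finset ι, S ⊆ A ∧ S.Nonempty ∧
      (∀ s ∈ S, ∀ t ∈ S, s ≠ t → p s + x s ≤ p t ∨ p t + x t ≤ p s) ∧
      (∀ j ∈ A, ∀ t : ℝ, p j ≤ t → t < p j + x j →
        (∃ s ∈ S, p s ≤ t ∧ t < p s + x s) ∨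
        (∃ s ∈ S, p s + x s ≤ t ∧ ∀ k ∈ A, p k ≤ t → t < p k + x k → p k < p s + x s)) := by
  intro n
  induction n with
  | zero =>
    intro A hc _ hne
    rw [Nat.le_zero, Finset.card_eq_zero] at hc
    exact absurd hc (Finset.nonempty_iff_ne_empty.mp hne)
  | succ n ih =>
    intro A hc hx hne
    obtain ⟨s, hs, hmin⟩ := A.exists_min_image p hne
    set A' := A.filter (fun j => p s + x s ≤ p j) with hA'
    have hsA' : s ∉ A' := by
      simp only [hA', Finset.mem_filter]
      rintro ⟨-, hle⟩
      have := hx s hs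
      linarith
    rcases A'.eq_empty_or_nonempty with hAe | hAne
    · refine ⟨{s}, Finset.singleton_subset_iff.mpr hs, Finset.singleton_nonempty s, by simp, ?_⟩
      intro j hj t hpt htp
      by_cases hts : p s ≤ t ∧ t < p s + x s
      · exact Or.inl ⟨s, Finset.mem_singleton_self s, hts⟩
      · right
        refine ⟨s, Finset.mem_singleton_self s, ?_, ?_⟩
        · have h1 : p s ≤ p j := hmin j hj
          push_neg at hts
          exact hts (by linarith)
        · intro k hk _ _
          by_contra hcon
          push_neg at hcon
          have : k ∈ A' := Finset.mem_filter.mpr ⟨hk, hcon⟩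
          rw [hAe] at this
          simp at this
    · have hcard : A'.card ≤ n := by
        have hsub : A' ⊆ A := Finset.filter_subset _ _
        have hss : A' ⊂ A := Finset.ssubset_iff_of_subset hsub |>.mpr ⟨s, hs, hsA'⟩
        have := Finset.card_lt_card hss
        omega
      obtain ⟨S', hS'A', hS'ne, hS'ord, hS'cov⟩ := ih A' hcard
        (fun j hj => hx j (Finset.filter_subset _ _ hj)) hAne
      have hS'A : S' ⊆ A := hS'A'.trans (Finset.filter_subset _ _)
      refine ⟨insert s S', Finset.insert_subset hs hS'A, Finset.insert_nonempty _ _, ?_, ?_⟩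
      · intro a ha b hb hab
        rcases Finset.mem_insert.mp ha with rfl | ha' <;>
          rcases Finset.mem_insert.mp hb with rfl | hb'
        · exact absurd rfl hab
        · exact Or.inl (Finset.mem_filter.mp (hS'A' hb')).2
        · exact Or.inr (Finset.mem_filter.mp (hS'A' ha')).2
        · exact hS'ord a ha' b hb' hab
      · intro j hj t hpt htp
        by_cases hts : p s ≤ t ∧ t < p s + x s
        · exact Or.inl ⟨s, Finset.mem_insert_self _ _, hts⟩
        have hst : p s + x s ≤ t := by
          have h1 : p s ≤ p j := hmin j hj
          push_neg at hts
          exact hts (by linarith)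
        by_cases hexj : ∃ j' ∈ A', p j' ≤ t ∧ t < p j' + x j'
        · obtain ⟨j', hj', hj't⟩ := hexj
          rcases hS'cov j' hj' t hj't.1 hj't.2 with ⟨s', hs', hss'⟩ | ⟨s'', hs'', h1, h2⟩
          · exact Or.inl ⟨s', Finset.mem_insert_of_mem hs', hss'⟩
          · right
            refine ⟨s'', Finset.mem_insert_of_mem hs'', h1, ?_⟩
            intro k hk hk1 hk2
            by_cases hkA' : k ∈ A'
            · exact h2 k hkA' hk1 hk2
            · have : ¬ (p s + x s ≤ p k) := fun hcon => hkA' (Finset.mem_filter.mpr ⟨hk, hcon⟩)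
              push_neg at this
              have hs''A : s'' ∈ A' := hS'A' hs''
              have h3 : p s + x s ≤ p s'' := (Finset.mem_filter.mp hs''A).2
              have h4 : 0 < x s'' := hx s'' (hS'A hs'')
              linarith
        · right
          refine ⟨s, Finset.mem_insert_self _ _, hst, ?_⟩
          intro k hk hk1 hk2
          by_contra hcon
          push_neg at hcon
          exact hexj ⟨k, Finset.mem_filter.mpr ⟨hk, hcon⟩, hk1, hk2⟩

lemma wdff_aux {u : ℝ → ℝ} (hu : DualFeasible u) {ι : Type*} (p x : ι → ℝ) :
    ∀ (n : ℕ) (A : Finset ι) (v : ι → ℝ) (c : ℝ), A.card ≤ n →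
    (∀ j ∈ A, 0 ≤ p j ∧ 0 < x j ∧ p j + x j ≤ 1 ∧ 0 < v j) →
    (∀ t : ℝ, ∑ j ∈ A.filter (fun j => p j ≤ t ∧ t < p j + x j), v j ≤ c) →
    ∑ j ∈ A, v j * u (x j) ≤ c := by
  intro n
  induction n with
  | zero =>
    intro A v c hc _ hload
    rw [Nat.le_zero, Finset.card_eq_zero] at hc
    subst hc
    simpa using hload 0
  | succ n ih =>
    intro A v c hc hbox hload
    rcases A.eq_empty_or_nonempty with rfl | hne
    · simpa using hload 0
    -- chain
    obtain ⟨S, hSA, hSne, hSord, hScov⟩ := chain_exists p x A.card A le_rfl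
      (fun j hj => (hbox j hj).2.1) hne
    obtain ⟨s₀, hs₀S, hmin⟩ := S.exists_min_image v hSne
    set lam := v s₀ with hlam
    have hs₀A : s₀ ∈ A := hSA hs₀S
    have hlampos : 0 < lam := (hbox s₀ hs₀A).2.2.2
    have hvnn : ∀ j ∈ A, 0 ≤ v j := fun j hj => le_of_lt (hbox j hj).2.2.2
    have hlamc : lam ≤ c := by
      have h1 := hload (p s₀)
      have h2 : s₀ ∈ A.filter (fun j => p j ≤ p s₀ ∧ p s₀ < p j + x j) := by
        refine Finset.mem_filter.mpr ⟨hs₀A, le_refl _, ?_⟩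
        have := (hbox s₀ hs₀A).2.1; linarith
      have h3 := Finset.single_le_sum
        (fun j hj => hvnn j (Finset.mem_of_mem_filter j hj)) h2
      linarith
    -- new weights
    set v' : ι → ℝ := fun j => if j ∈ S then v j - lam else v j with hv'
    have hv'nn : ∀ j ∈ A, 0 ≤ v' j := by
      intro j hj
      simp only [hv']
      split
      · next hjS => have := hmin j hjS; linarith
      · exact hvnn j hj
    set A' := A.filter (fun j => 0 < v' j) with hA'
    have hA'card : A'.card ≤ n := by
      have hs₀A' : s₀ ∉ A' := by
        simp only [hA', Finset.mem_filter, hv', if_pos hs₀S]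
        rintro ⟨-, hlt⟩; linarith
      have : A' ⊂ A := (Finset.ssubset_iff_of_subset (Finset.filter_subset _ _)).mpr
        ⟨s₀, hs₀A, hs₀A'⟩
      have := Finset.card_lt_card this
      omega
    -- load bound for the reduced system
    have hload' : ∀ t : ℝ, ∑ j ∈ A'.filter (fun j => p j ≤ t ∧ t < p j + x j), v' j ≤ c - lam := by
      intro t
      have hsub : ∑ j ∈ A'.filter (fun j => p j ≤ t ∧ t < p j + x j), v' j ≤
          ∑ j ∈ A.filter (fun j => p j ≤ t ∧ t < p j + x j), v' j := by
        apply Finset.sum_le_sum_of_subset_of_nonneg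
        · exact Finset.filter_subset_filter _ (Finset.filter_subset _ _)
        · intro j hj _; exact hv'nn j (Finset.mem_of_mem_filter j hj)
      set F := A.filter (fun j => p j ≤ t ∧ t < p j + x j) with hF
      have hFA : F ⊆ A := Finset.filter_subset _ _
      by_cases hcovered : ∃ s ∈ S, p s ≤ t ∧ t < p s + x s
      · obtain ⟨s, hsS, hst⟩ := hcovered
        have hsF : s ∈ F := Finset.mem_filter.mpr ⟨hSA hsS, hst⟩
        have hsplit : ∑ j ∈ F, v' j ≤ (∑ j ∈ F, v j) - lam := by
          have h1 : ∑ j ∈ F, v' j ≤ ∑ j ∈ F, (v j - if j = s then lam else 0) := by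
            apply Finset.sum_le_sum
            intro j hj
            simp only [hv']
            by_cases hjs : j = s
            · subst hjs; rw [if_pos hsS, if_pos rfl]
            · rw [if_neg hjs]
              split
              · next hjS => have := hmin s hsS; nlinarith [hlampos]
              · linarith
          rw [Finset.sum_sub_distrib] at h1
          rw [Finset.sum_ite_eq' F s (fun _ => lam)] at h1
          rw [if_pos hsF] at h1
          linarith
        have := hload t
        calc ∑ j ∈ A'.filter (fun j => p j ≤ t ∧ t < p j + x j), v' j
            ≤ ∑ j ∈ F, v' j := hsub
          _ ≤ (∑ j ∈ F, v j) - lam := hsplit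
          _ ≤ c - lam := by linarith
      · -- uncovered
        have hFS : ∀ j ∈ F, j ∉ S := by
          intro j hj hjS
          exact hcovered ⟨j, hjS, (Finset.mem_filter.mp hj).2⟩
        have hv'F : ∀ j ∈ F, v' j = v j := by
          intro j hj; simp only [hv', if_neg (hFS j hj)]
        rcases F.eq_empty_or_nonempty with hFe | ⟨j₀, hj₀⟩
        · rw [hFe, Finset.sum_empty] at hsub
          linarith
        · have hj₀A : j₀ ∈ A := hFA hj₀
          have hj₀t := (Finset.mem_filter.mp hj₀).2
          rcases hScov j₀ hj₀A t hj₀t.1 hj₀t.2 with ⟨s, hsS, hst⟩ | ⟨s, hsS, hst, hall⟩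
          · exact absurd ⟨s, hsS, hst⟩ hcovered
          · -- pick witness point t' just left of p s + x s
            have hsA : s ∈ A := hSA hsS
            have hsF : s ∉ F := fun hsF => hcovered ⟨s, hsS, (Finset.mem_filter.mp hsF).2⟩
            set G := insert s F with hG
            have hGne : G.Nonempty := Finset.insert_nonempty _ _
            set t' := G.sup' hGne p with ht'
            have ht'lt : t' < p s + x s := by
              rw [ht', Finset.sup'_lt_iff]
              intro k hk
              rcases Finset.mem_insert.mp hk with hks | hkF
              · rw [hks]; have := (hbox s hsA).2.1; linarith
              · exact hall k (hFA hkF) (Finset.mem_filter.mp hkF).2.1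
                  (Finset.mem_filter.mp hkF).2.2
            have hGsub : G ⊆ A.filter (fun j => p j ≤ t' ∧ t' < p j + x j) := by
              intro k hk
              refine Finset.mem_filter.mpr ⟨?_, Finset.le_sup' p hk, ?_⟩
              · rcases Finset.mem_insert.mp hk with hks | hkF
                · rw [hks]; exact hsA
                · exact hFA hkF
              · rcases Finset.mem_insert.mp hk with hks | hkF
                · rw [hks]; exact ht'lt
                · have := (Finset.mem_filter.mp hkF).2.2
                  linarith
            have hGload : ∑ j ∈ G, v j ≤ c := by
              refine le_trans (Finset.sum_le_sum_of_subset_of_nonneg hGsub ?_) (hload t')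
              intro j hj _; exact hvnn j (Finset.mem_of_mem_filter j hj)
            rw [hG, Finset.sum_insert hsF] at hGload
            have hmins := hmin s hsS
            have hFv : ∑ j ∈ F, v' j = ∑ j ∈ F, v j := Finset.sum_congr rfl hv'F
            calc ∑ j ∈ A'.filter (fun j => p j ≤ t ∧ t < p j + x j), v' j
                ≤ ∑ j ∈ F, v' j := hsub
              _ = ∑ j ∈ F, v j := hFv
              _ ≤ c - lam := by linarith
    -- apply IH
    have hIH : ∑ j ∈ A', v' j * u (x j) ≤ c - lam := by
      apply ih A' v' (c - lam) hA'card
      · intro j hj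
        have hjA := Finset.mem_of_mem_filter j hj
        exact ⟨(hbox j hjA).1, (hbox j hjA).2.1, (hbox j hjA).2.2.1,
          (Finset.mem_filter.mp hj).2⟩
      · exact hload'
    -- chain contributes ≤ lam
    have hchain : ∑ s ∈ S, u (x s) ≤ 1 := by
      apply hu.sum_le
      · intro j hj
        have hjA := hSA hj
        refine ⟨le_of_lt (hbox j hjA).2.1, ?_⟩
        have h1 := (hbox j hjA).1
        have h2 := (hbox j hjA).2.2.1
        linarith
      · apply sum_lengths p x S.card S 1 le_rfl zero_le_one
        · intro j hj
          have hjA := hSA hj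
          exact ⟨(hbox j hjA).1, (hbox j hjA).2.1, (hbox j hjA).2.2.1⟩
        · exact hSord
    have hunn : ∀ j ∈ A, 0 ≤ u (x j) := by
      intro j hj
      refine (hu.1 (x j) ⟨le_of_lt (hbox j hj).2.1, ?_⟩).1
      have h1 := (hbox j hj).1
      have h2 := (hbox j hj).2.2.1
      linarith
    -- put it together
    have hterm : ∀ j ∈ A, v j * u (x j)
        = v' j * u (x j) + (if j ∈ S then lam * u (x j) else 0) := by
      intro j hj
      simp only [hv']
      split <;> ring
    have hzero : ∑ j ∈ A.filter (fun j => ¬ 0 < v' j), v' j * u (x j) = 0 := by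
      apply Finset.sum_eq_zero
      intro j hj
      have hjA := Finset.mem_of_mem_filter j hj
      have h1 := hv'nn j hjA
      have h2 := (Finset.mem_filter.mp hj).2
      have h3 : v' j = 0 := le_antisymm (not_lt.mp h2) h1
      rw [h3, zero_mul]
    have hA'sum : ∑ j ∈ A, v' j * u (x j) = ∑ j ∈ A', v' j * u (x j) := by
      rw [← Finset.sum_filter_add_sum_filter_not A (fun j => 0 < v' j), hzero, add_zero]
    calc ∑ j ∈ A, v j * u (x j)
        = ∑ j ∈ A, (v' j * u (x j) + if j ∈ S then lam * u (x j) else 0) :=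
          Finset.sum_congr rfl hterm
      _ = ∑ j ∈ A, v' j * u (x j) + ∑ j ∈ A, (if j ∈ S then lam * u (x j) else 0) :=
          Finset.sum_add_distrib
      _ = ∑ j ∈ A', v' j * u (x j) + ∑ j ∈ A ∩ S, lam * u (x j) := by
          rw [hA'sum, Finset.sum_ite_mem]
      _ = ∑ j ∈ A', v' j * u (x j) + lam * ∑ j ∈ S, u (x j) := by
          rw [Finset.inter_eq_right.mpr hSA, Finset.mul_sum]
      _ ≤ (c - lam) + lam * 1 := by
          have h4 : lam * ∑ j ∈ S, u (x j) ≤ lam * 1 :=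
            mul_le_mul_of_nonneg_left hchain (le_of_lt hlampos)
          linarith
      _ = c := by ring

lemma wdff {u : ℝ → ℝ} (hu : DualFeasible u) {ι : Type*} (A : Finset ι) (p x v : ι → ℝ)
    (hbox : ∀ j ∈ A, 0 ≤ p j ∧ 0 ≤ x j ∧ p j + x j ≤ 1 ∧ 0 ≤ v j)
    (hload : ∀ t : ℝ, ∑ j ∈ A.filter (fun j => p j ≤ t ∧ t < p j + x j), v j ≤ 1) :
    ∑ j ∈ A, v j * u (x j) ≤ 1 := by
  set A₀ := A.filter (fun j => 0 < x j ∧ 0 < v j) with hA₀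
  have hzero : ∑ j ∈ A.filter (fun j => ¬(0 < x j ∧ 0 < v j)), v j * u (x j) = 0 := by
    apply Finset.sum_eq_zero
    intro j hj
    have hjA := Finset.mem_of_mem_filter j hj
    have h2 := (Finset.mem_filter.mp hj).2
    push_neg at h2
    by_cases hx : 0 < x j
    · have hv0 : v j = 0 := le_antisymm (h2 hx) (hbox j hjA).2.2.2
      rw [hv0, zero_mul]
    · have hx0 : x j = 0 := le_antisymm (not_lt.mp hx) (hbox j hjA).2.1
      rw [hx0, hu.zero', mul_zero]
  have hsum0 : ∑ j ∈ A, v j * u (x j) = ∑ j ∈ A₀, v j * u (x j) := by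
    rw [← Finset.sum_filter_add_sum_filter_not A (fun j => 0 < x j ∧ 0 < v j), hzero, add_zero]
  rw [hsum0]
  apply wdff_aux hu p x A₀.card A₀ v 1 le_rfl
  · intro j hj
    have hjA := Finset.mem_of_mem_filter j hj
    have h2 := (Finset.mem_filter.mp hj).2
    exact ⟨(hbox j hjA).1, h2.1, (hbox j hjA).2.2.1, h2.2⟩
  · intro t
    refine le_trans (Finset.sum_le_sum_of_subset_of_nonneg ?_ ?_) (hload t)
    · exact Finset.filter_subset_filter _ (Finset.filter_subset _ _)
    · intro j hj _
      exact (hbox j (Finset.mem_of_mem_filter j hj)).2.2.2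

open MeasureTheory in
lemma base_integration {V : Type*} [Fintype V] (a len v : V → ℝ) (h : ℝ) (hh : 0 ≤ h)
    (hbox : ∀ b : V, 0 ≤ a b ∧ 0 ≤ len b ∧ a b + len b ≤ h ∧ 0 ≤ v b)
    (hload : ∀ t : ℝ, ∑ b ∈ Finset.univ.filter (fun b => a b ≤ t ∧ t < a b + len b), v b ≤ 1) :
    ∑ b, v b * len b ≤ h := by
  set f : ℝ → ℝ := fun t => ∑ b, Set.indicator (Set.Ico (a b) (a b + len b)) (fun _ => v b) t
    with hf
  set g : ℝ → ℝ := Set.indicator (Set.Ico (0:ℝ) h) (fun _ => (1:ℝ)) with hg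
  have hbint : ∀ b : V, Integrable
      (Set.indicator (Set.Ico (a b) (a b + len b)) (fun _ => v b)) := by
    intro b
    rw [integrable_indicator_iff measurableSet_Ico]
    exact integrableOn_const measure_Ico_lt_top.ne
  have hfint : Integrable f := by
    rw [hf]
    exact integrable_finset_sum _ (fun b _ => hbint b)
  have hgint : Integrable g := by
    rw [hg, integrable_indicator_iff measurableSet_Ico]
    exact integrableOn_const measure_Ico_lt_top.ne
  have hle : ∀ t, f t ≤ g t := by
    intro t
    by_cases ht : t ∈ Set.Ico (0:ℝ) h
    · have hgt : g t = 1 := Set.indicator_of_mem ht _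
      have hft : f t = ∑ b ∈ Finset.univ.filter (fun b => a b ≤ t ∧ t < a b + len b), v b := by
        rw [hf]
        simp only
        rw [Finset.sum_filter]
        apply Finset.sum_congr rfl
        intro b _
        rw [Set.indicator_apply]
        by_cases hb : a b ≤ t ∧ t < a b + len b
        · rw [if_pos hb, if_pos (Set.mem_Ico.mpr hb)]
        · rw [if_neg hb, if_neg (fun hc => hb (Set.mem_Ico.mp hc))]
      rw [hft, hgt]
      exact hload t
    · have hgt : g t = 0 := Set.indicator_of_notMem ht _
      have hft : f t = 0 := by
        rw [hf]
        apply Finset.sum_eq_zero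
        intro b _
        apply Set.indicator_of_notMem
        intro hc
        rcases Set.mem_Ico.mp hc with ⟨h1, h2⟩
        rcases hbox b with ⟨hb1, hb2, hb3, _⟩
        exact ht (Set.mem_Ico.mpr ⟨le_trans hb1 h1, lt_of_lt_of_le h2 hb3⟩)
      rw [hft, hgt]
  have hint : ∫ t, f t = ∑ b, v b * len b := by
    rw [hf]
    rw [integral_finset_sum _ (fun b _ => hbint b)]
    apply Finset.sum_congr rfl
    intro b _
    rw [integral_indicator_const _ measurableSet_Ico, Real.volume_real_Ico, smul_eq_mul]
    rw [max_eq_left (by linarith [(hbox b).2.1] : (0:ℝ) ≤ a b + len b - a b)]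
    ring
  have hgval : ∫ t, g t = h := by
    rw [hg, integral_indicator_const _ measurableSet_Ico, Real.volume_real_Ico, smul_eq_mul,
      max_eq_left (by linarith : (0:ℝ) ≤ h - 0)]
    ring
  calc ∑ b, v b * len b = ∫ t, f t := hint.symm
    _ ≤ ∫ t, g t := integral_mono hfint hgint hle
    _ = h := hgval

lemma strip_aux (d : ℕ) : ∀ {V : Type*} [Fintype V] (w p : V → Fin (d+1) → ℝ) (v : V → ℝ),
    (∀ b, 0 ≤ v b ∧ v b ≤ 1) →
    (∀ b (i : Fin d), 0 ≤ w b i.castSucc ∧ 0 ≤ p b i.castSucc ∧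
      p b i.castSucc + w b i.castSucc ≤ 1) →
    (∀ b, 0 ≤ w b (Fin.last d) ∧ 0 ≤ p b (Fin.last d)) →
    ∀ (h : ℝ), 0 ≤ h →
    (∀ b, p b (Fin.last d) + w b (Fin.last d) ≤ h) →
    (∀ q : Fin (d+1) → ℝ,
      ∑ b ∈ Finset.univ.filter (fun b => ∀ i, p b i ≤ q i ∧ q i < p b i + w b i), v b ≤ 1) →
    ∀ (u : Fin d → ℝ → ℝ), (∀ i, DualFeasible (u i)) →
    ∑ b, v b * ((∏ i : Fin d, u i (w b i.castSucc)) * w b (Fin.last d)) ≤ h := by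
  induction d with
  | zero =>
    intro V _ w p v hv hw hwd h hh hph hload u hu
    have hgoal : ∀ b : V, v b * ((∏ i : Fin 0, u i (w b i.castSucc)) * w b (Fin.last 0))
        = v b * w b (Fin.last 0) := by
      intro b
      simp
    rw [Finset.sum_congr rfl (fun b _ => hgoal b)]
    apply base_integration (fun b => p b (Fin.last 0)) (fun b => w b (Fin.last 0)) v h hh
    · intro b
      exact ⟨(hwd b).2, (hwd b).1, hph b, (hv b).1⟩
    · intro t
      have hkey := hload (fun _ => t)
      refine le_trans (le_of_eq ?_) hkey
      apply Finset.sum_congr _ (fun _ _ => rfl)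
      apply Finset.filter_congr
      intro b _
      constructor
      · intro hb i
        have : i = Fin.last 0 := by omega
        rw [this]
        exact hb
      · intro hb
        exact hb (Fin.last 0)
  | succ d ih =>
    intro V _ w p v hv hw hwd h hh hph hload u hu
    have hw0 : ∀ b, 0 ≤ w b 0 ∧ 0 ≤ p b 0 ∧ p b 0 + w b 0 ≤ 1 := by
      intro b
      have := hw b 0
      rwa [Fin.castSucc_zero] at this
    set w' : V → Fin (d+1) → ℝ := fun b i => w b i.succ with hw'def
    set p' : V → Fin (d+1) → ℝ := fun b i => p b i.succ with hp'def
    set v' : V → ℝ := fun b => v b * u 0 (w b 0) with hv'def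
    have hu0mem : ∀ b, u 0 (w b 0) ∈ Set.Icc (0:ℝ) 1 := by
      intro b
      apply (hu 0).1
      rcases hw0 b with ⟨h1, h2, h3⟩
      exact ⟨h1, by linarith⟩
    have hv' : ∀ b, 0 ≤ v' b ∧ v' b ≤ 1 := by
      intro b
      rcases hu0mem b with ⟨h1, h2⟩
      rcases hv b with ⟨h3, h4⟩
      exact ⟨mul_nonneg h3 h1, mul_le_one₀ h4 h1 h2⟩
    have hload' : ∀ q' : Fin (d+1) → ℝ,
        ∑ b ∈ Finset.univ.filter (fun b => ∀ i, p' b i ≤ q' i ∧ q' i < p' b i + w' b i), v' b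
          ≤ 1 := by
      intro q'
      apply wdff (hu 0) _ (fun b => p b 0) (fun b => w b 0) v
      · intro b _
        rcases hw0 b with ⟨h1, h2, h3⟩
        exact ⟨h2, h1, h3, (hv b).1⟩
      · intro t
        have hkey := hload (Fin.cons t q')
        refine le_trans (le_of_eq ?_) hkey
        rw [Finset.filter_filter]
        apply Finset.sum_congr _ (fun _ _ => rfl)
        apply Finset.filter_congr
        intro b _
        simp only [hp'def, hw'def]
        constructor
        · rintro ⟨hall, h0⟩ i
          induction i using Fin.cases with
          | zero => rw [Fin.cons_zero]; exact h0
          | succ j => rw [Fin.cons_succ]; exact hall j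
        · intro hall
          refine ⟨fun j => ?_, ?_⟩
          · have := hall j.succ
            rwa [Fin.cons_succ] at this
          · have := hall 0
            rwa [Fin.cons_zero] at this
    have hIH := ih w' p' v' hv'
      (by
        intro b i
        have := hw b i.succ
        simp only [hw'def, hp'def]
        rwa [← Fin.succ_castSucc] at this)
      (by
        intro b
        have h1 := hwd b
        simp only [hw'def, hp'def, Fin.succ_last]
        exact h1)
      h hh
      (by
        intro b
        have h1 := hph b
        simp only [hw'def, hp'def, Fin.succ_last]
        exact h1)
      hload' (fun i => u i.succ) (fun i => hu i.succ)
    refine le_trans (le_of_eq ?_) hIH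
    apply Finset.sum_congr rfl
    intro b _
    have hprod : (∏ i : Fin (d+1), u i (w b i.castSucc))
        = u 0 (w b 0) * ∏ i : Fin d, u i.succ (w' b i.castSucc) := by
      rw [Fin.prod_univ_succ]
      rw [Fin.castSucc_zero]
      apply congrArg
      apply Finset.prod_congr rfl
      intro i _
      simp only [hw'def]
      rw [← Fin.succ_castSucc]
    have hlast : w b (Fin.last (d+1)) = w' b (Fin.last d) := by
      simp only [hw'def, Fin.succ_last]
    rw [hprod, hlast]
    simp only [hv'def]
    ring


/-- Strip packing bound: if the boxes `(V,w)` (with base sizes in `[0,1]` in the first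
`d` coordinates and nonnegative height in the last coordinate) admit an orthogonal
packing into the strip `[0,1]^d × [0,h]`, then for all dual feasible functions
`u₁, …, u_d` the transformed total volume `∑_b (∏ᵢ uᵢ(wᵢ(b))) · w_{d+1}(b)` is at
most `h`; in particular it is a lower bound on the optimal strip height. -/
theorem stripPacking_lowerBound {V : Type*} [Fintype V] {d : ℕ}
    (w : V → Fin (d + 1) → ℝ)
    (hw : ∀ b (i : Fin d), w b i.castSucc ∈ Set.Icc (0 : ℝ) 1)
    (hwd : ∀ b, 0 ≤ w b (Fin.last d))
    (h : ℝ) (hh : 0 < h)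
    (p : V → Fin (d + 1) → ℝ)
    (hp0 : ∀ b i, 0 ≤ p b i)
    (hp1 : ∀ b (i : Fin d), p b i.castSucc + w b i.castSucc ≤ 1)
    (hph : ∀ b, p b (Fin.last d) + w b (Fin.last d) ≤ h)
    (hdisj : ∀ b c : V, b ≠ c →
      ∃ i, p b i + w b i ≤ p c i ∨ p c i + w c i ≤ p b i)
    (u : Fin d → ℝ → ℝ) (hu : ∀ i, DualFeasible (u i)) :
    ∑ b, (∏ i : Fin d, u i (w b i.castSucc)) * w b (Fin.last d) ≤ h := by
  have hload : ∀ q : Fin (d+1) → ℝ,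
      ∑ b ∈ Finset.univ.filter (fun b => ∀ i, p b i ≤ q i ∧ q i < p b i + w b i),
        (fun _ : V => (1:ℝ)) b ≤ 1 := by
    intro q
    have hcard : (Finset.univ.filter
        (fun b => ∀ i, p b i ≤ q i ∧ q i < p b i + w b i) : Finset V).card ≤ 1 := by
      rw [Finset.card_le_one]
      intro b hb c hc
      by_contra hbc
      obtain ⟨i, hi⟩ := hdisj b c hbc
      have hbq := (Finset.mem_filter.mp hb).2 i
      have hcq := (Finset.mem_filter.mp hc).2 i
      rcases hi with hi | hi
      · linarith [hbq.2, hcq.1]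
      · linarith [hcq.2, hbq.1]
    calc ∑ b ∈ Finset.univ.filter
          (fun b => ∀ i, p b i ≤ q i ∧ q i < p b i + w b i), (fun _ : V => (1:ℝ)) b
        = (Finset.univ.filter
          (fun b => ∀ i, p b i ≤ q i ∧ q i < p b i + w b i) : Finset V).card := by
          simp
      _ ≤ 1 := by exact_mod_cast hcard
  have hmain := strip_aux d w p (fun _ => (1:ℝ)) (fun _ => ⟨zero_le_one, le_rfl⟩)
    (fun b i => ⟨(hw b i).1, hp0 b i.castSucc, hp1 b i⟩)
    (fun b => ⟨hwd b, hp0 b (Fin.last d)⟩)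
    h (le_of_lt hh) hph hload u hu
  simpa using hmain
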